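/- Let V be a vertex algebra and W a V-module. For any n ≥ 1, E_n(W) equals the linear span of the vectors u_{-1-i} w for u ∈ V, i ≥ 1, w ∈ E_{n-i}(W). Furthermore, for n ≥ 1, E_n(W) is linearly spanned by the vectors u^{(1)}_{-k_1-1}⋯u^{(r)}_{-k_r-1} w for r ≥ 1, u^{(1)},…,u^{(r)} ∈ V, w ∈ W, k_1,…,k_r ≥ 1 with k_1+⋯+k_r ≥ n. -/
import Mathlib


open scoped DirectSum

noncomputable section


/-- Integer binomial coefficient `C(m, i)` for `m : ℤ`, `i : ℕ`. -/
def intBinom (m : ℤ) (i : ℕ) : ℤ :=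
  (∏ j ∈ Finset.range i, (m - (j : ℤ))) / (i.factorial : ℤ)

/-- A vertex algebra over `ℂ`: a complex vector space `V` with a vacuum vector and a
linear state-field correspondence `Y`, `Y(v,x) = ∑ₙ vₙ x^{-n-1}`, satisfying
truncation, vacuum and creation properties, and Borcherds' commutator and
iterate formulas. -/
structure VertexAlgebra (V : Type*) [AddCommGroup V] [Module ℂ V] where
  /-- the coefficients of vertex operators: `Y u n v = uₙ v`. -/
  Y : V →ₗ[ℂ] ℤ → Module.End ℂ V
  /-- the vacuum vector `𝟏`. -/
  vac : V
  trunc : ∀ u v : V, ∃ N : ℕ, ∀ n : ℤ, (N : ℤ) ≤ n → Y u n v = 0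
  vac_act : ∀ (n : ℤ) (v : V), Y vac n v = if n = -1 then v else 0
  create : ∀ u : V, Y u (-1) vac = u
  create_nonneg : ∀ (u : V) (n : ℤ), 0 ≤ n → Y u n vac = 0
  commutator : ∀ (u v w : V) (m n : ℤ),
    Y u m (Y v n w) - Y v n (Y u m w)
      = ∑ᶠ i : ℕ, intBinom m i • Y (Y u i v) (m + n - i) w
  iterate : ∀ (u v w : V) (m n : ℤ),
    Y (Y u m v) n w
      = ∑ᶠ i : ℕ, ((-1 : ℤ) ^ i * intBinom m i) •
          (Y u (m - i) (Y v (n + i) w)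
            - ((((-1 : ℤˣ) ^ m : ℤˣ) : ℤ) • Y v (m + n - i) (Y u i w)))

/-- A module for a vertex algebra. -/
structure VAModule {V : Type*} [AddCommGroup V] [Module ℂ V] (va : VertexAlgebra V)
    (W : Type*) [AddCommGroup W] [Module ℂ W] where
  /-- the action `act v n w = vₙ w`. -/
  act : V →ₗ[ℂ] ℤ → Module.End ℂ W
  trunc : ∀ (v : V) (w : W), ∃ N : ℕ, ∀ n : ℤ, (N : ℤ) ≤ n → act v n w = 0
  vac_act : ∀ (n : ℤ) (w : W), act va.vac n w = if n = -1 then w else 0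
  commutator : ∀ (u v : V) (w : W) (m n : ℤ),
    act u m (act v n w) - act v n (act u m w)
      = ∑ᶠ i : ℕ, intBinom m i • act (va.Y u i v) (m + n - i) w
  iterate : ∀ (u v : V) (w : W) (m n : ℤ),
    act (va.Y u m v) n w
      = ∑ᶠ i : ℕ, ((-1 : ℤ) ^ i * intBinom m i) •
          (act u (m - i) (act v (n + i) w)
            - ((((-1 : ℤˣ) ^ m : ℤˣ) : ℤ) • act v (m + n - i) (act u i w)))

variable {V : Type*} [AddCommGroup V] [Module ℂ V]

/-- The adjoint module of a vertex algebra. -/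
def VertexAlgebra.adjoint (va : VertexAlgebra V) : VAModule va V where
  act := va.Y
  trunc := va.trunc
  vac_act := va.vac_act
  commutator := va.commutator
  iterate := va.iterate

variable {W : Type*} [AddCommGroup W] [Module ℂ W]

/-- `Efilt M n = E_n(W)`: the subspace of `W` spanned by the vectors
`u⁽¹⁾_{-1-k₁} ⋯ u⁽ʳ⁾_{-1-k_r} w` for `r ≥ 1`, `u⁽ⁱ⁾ ∈ V`, `w ∈ W`, `kᵢ ≥ 0`,
`k₁ + ⋯ + k_r ≥ n`. -/
def Efilt {va : VertexAlgebra V} (M : VAModule va W) (n : ℤ) : Submodule ℂ W :=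
  Submodule.span ℂ {x : W | ∃ (L : List (V × ℕ)) (w : W), L ≠ [] ∧
    n ≤ (L.map fun p => ((p.2 : ℤ))).sum ∧
    x = L.foldr (fun p acc => M.act p.1 (-1 - (p.2 : ℤ)) acc) w}

/-- `Cfilt M n = C_n(W)`: the subspace of `W` spanned by the vectors `v_{-n} w`. -/
def Cfilt {va : VertexAlgebra V} (M : VAModule va W) (n : ℕ) : Submodule ℂ W :=
  Submodule.span ℂ {x : W | ∃ (v : V) (w : W), x = M.act v (-(n : ℤ)) w}

section Aux

variable {va : VertexAlgebra V} (M : VAModule va W)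

lemma finsum_mem_submodule {S : Submodule ℂ W} {f : ℕ → W} (h : ∀ i, f i ∈ S) :
    ∑ᶠ i, f i ∈ S := by
  by_cases hf : (Function.support f).Finite
  · rw [finsum_eq_sum f hf]
    exact Submodule.sum_mem _ fun i _ => h i
  · rw [finsum_of_infinite_support hf]
    exact S.zero_mem

lemma Efilt_mono {m n : ℤ} (h : m ≤ n) : Efilt M n ≤ Efilt M m :=
  Submodule.span_mono fun x ⟨L, w, hL, hs, hx⟩ => ⟨L, w, hL, h.trans hs, hx⟩

lemma Efilt_eq_top {n : ℤ} (h : n ≤ 0) : Efilt M n = ⊤ := by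
  rw [eq_top_iff]
  intro w _
  apply Submodule.subset_span
  refine ⟨[(va.vac, 0)], w, by simp, by simpa using h, ?_⟩
  simp [M.vac_act]

lemma act_mem_Efilt (u : V) (k : ℕ) {m : ℤ} {x : W} (hx : x ∈ Efilt M m) :
    M.act u (-1 - (k : ℤ)) x ∈ Efilt M (m + k) := by
  have hle : Efilt M m ≤ (Efilt M (m + k)).comap (M.act u (-1 - (k : ℤ))) := by
    rw [Efilt, Submodule.span_le]
    rintro x ⟨L, w, hL, hs, rfl⟩
    refine Submodule.subset_span ⟨(u, k) :: L, w, by simp, ?_, rfl⟩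
    simp only [List.map_cons, List.sum_cons]
    omega
  exact hle hx

/-- The span appearing in the first part of Lemma 2.10. -/
def S1 (n : ℤ) : Submodule ℂ W :=
  Submodule.span ℂ {x : W | ∃ (u : V) (i : ℕ), 1 ≤ i ∧
    ∃ w ∈ Efilt M (n - (i : ℤ)), x = M.act u (-1 - (i : ℤ)) w}

/-- The span appearing in the second part of Lemma 2.10. -/
def S2 (n : ℤ) : Submodule ℂ W :=
  Submodule.span ℂ {x : W | ∃ (L : List (V × ℕ)) (w : W), L ≠ [] ∧
    (∀ p ∈ L, 1 ≤ p.2) ∧ n ≤ (L.map fun p => ((p.2 : ℤ))).sum ∧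
    x = L.foldr (fun p acc => M.act p.1 (-1 - (p.2 : ℤ)) acc) w}

lemma act_neg_one_mem_S1 (n : ℤ) (u : V) {y : W} (hy : y ∈ S1 M n) :
    M.act u (-1 : ℤ) y ∈ S1 M n := by
  induction hy using Submodule.span_induction with
  | mem x hx =>
    obtain ⟨v, i, hi, w, hw, rfl⟩ := hx
    have hcomm := M.commutator u v w (-1) (-1 - (i : ℤ))
    have heq : M.act u (-1) (M.act v (-1 - (i : ℤ)) w)
        = (∑ᶠ j : ℕ, intBinom (-1) j •
            M.act (va.Y u j v) (-1 + (-1 - (i : ℤ)) - j) w)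
          + M.act v (-1 - (i : ℤ)) (M.act u (-1) w) := by
      rw [← hcomm]; abel
    rw [heq]
    refine Submodule.add_mem _ (finsum_mem_submodule fun j => ?_) ?_
    · refine AddSubgroup.zsmul_mem (S1 M n).toAddSubgroup ?_ _
      have h1 : (-1 : ℤ) + (-1 - (i : ℤ)) - j = -1 - ((i + 1 + j : ℕ) : ℤ) := by
        push_cast; ring
      rw [h1]
      exact Submodule.subset_span ⟨va.Y u j v, i + 1 + j, by omega, w,
        Efilt_mono M (by push_cast; omega) hw, rfl⟩
    · have h0 : M.act u (-1 : ℤ) w ∈ Efilt M (n - (i : ℤ)) := by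
        have h := act_mem_Efilt M u 0 hw
        simpa using h
      exact Submodule.subset_span ⟨v, i, hi, _, h0, rfl⟩
  | zero => rw [map_zero]; exact Submodule.zero_mem _
  | add x y hx hy ihx ihy => rw [map_add]; exact Submodule.add_mem _ ihx ihy
  | smul a x hx ih => rw [map_smul]; exact Submodule.smul_mem _ _ ih

lemma foldr_mem_S1 (n : ℤ) (hn : 1 ≤ n) (L : List (V × ℕ)) (w : W) (hL : L ≠ [])
    (hs : n ≤ (L.map fun p => ((p.2 : ℤ))).sum) :
    L.foldr (fun p acc => M.act p.1 (-1 - (p.2 : ℤ)) acc) w ∈ S1 M n := by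
  induction L generalizing w with
  | nil => exact absurd rfl hL
  | cons p L' ih =>
    obtain ⟨u, k⟩ := p
    simp only [List.map_cons, List.sum_cons] at hs
    rcases Nat.eq_zero_or_pos k with hk | hk
    · subst hk
      have hL' : L' ≠ [] := by
        rintro rfl; simp at hs; omega
      have hy := ih w hL' (by simpa using hs)
      have h := act_neg_one_mem_S1 M n u hy
      simpa using h
    · have hy : L'.foldr (fun p acc => M.act p.1 (-1 - (p.2 : ℤ)) acc) w
          ∈ Efilt M (n - (k : ℤ)) := by
        rcases eq_or_ne L' [] with rfl | hL'
        · rw [Efilt_eq_top M (by simp at hs ⊢; omega)]; trivial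
        · exact Submodule.subset_span ⟨L', w, hL', by omega, rfl⟩
      exact Submodule.subset_span ⟨u, k, hk, _, hy, rfl⟩

lemma part1 (n : ℤ) (hn : 1 ≤ n) : Efilt M n = S1 M n := by
  apply le_antisymm
  · rw [Efilt, Submodule.span_le]
    rintro x ⟨L, w, hL, hs, rfl⟩
    exact foldr_mem_S1 M n hn L w hL hs
  · rw [S1, Submodule.span_le]
    rintro x ⟨u, i, hi, w, hw, rfl⟩
    have h := act_mem_Efilt M u i hw
    have h2 : n - (i : ℤ) + i = n := by ring
    rwa [h2] at h

lemma act_mem_S2 (u : V) (i : ℕ) (hi : 1 ≤ i) {n : ℤ} {w : W}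
    (hw : w ∈ S2 M (n - (i : ℤ))) : M.act u (-1 - (i : ℤ)) w ∈ S2 M n := by
  have hle : S2 M (n - (i : ℤ)) ≤ (S2 M n).comap (M.act u (-1 - (i : ℤ))) := by
    rw [S2, Submodule.span_le]
    rintro x ⟨L, w', hL, hpos, hs, rfl⟩
    refine Submodule.subset_span ⟨(u, i) :: L, w', by simp, ?_, ?_, rfl⟩
    · rintro p hp
      rcases List.mem_cons.mp hp with rfl | hp
      · exact hi
      · exact hpos p hp
    · simp only [List.map_cons, List.sum_cons]
      omega
  exact hle hw

lemma S2_le_Efilt (n : ℤ) : S2 M n ≤ Efilt M n :=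
  Submodule.span_mono fun x ⟨L, w, hL, _, hs, hx⟩ => ⟨L, w, hL, hs, hx⟩

lemma part2aux (N : ℕ) : ∀ n : ℤ, 1 ≤ n → n ≤ (N : ℤ) → Efilt M n ≤ S2 M n := by
  induction N with
  | zero => intro n h1 h2; omega
  | succ N ih =>
    intro n h1 h2
    rw [part1 M n h1, S1, Submodule.span_le]
    rintro x ⟨u, i, hi, w, hw, rfl⟩
    rcases le_or_gt (n - (i : ℤ)) 0 with hni | hni
    · refine Submodule.subset_span ⟨[(u, i)], w, by simp, ?_, by simp; omega, rfl⟩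
      rintro p hp
      rcases List.mem_singleton.mp hp with rfl
      exact hi
    · exact act_mem_S2 M u i hi (ih (n - i) hni (by push_cast; omega) hw)

lemma part2 (n : ℤ) (hn : 1 ≤ n) : Efilt M n = S2 M n :=
  le_antisymm (part2aux M n.toNat n hn (by omega)) (S2_le_Efilt M n)

end Aux

/-- **Lemma 2.10 (lgeneral-ele).** For a vertex algebra `V`, a `V`-module `W` and
`n ≥ 1`, `E_n(W)` is the span of the vectors `u_{-1-i} w` for `u ∈ V`, `i ≥ 1`,
`w ∈ E_{n-i}(W)`; furthermore `E_n(W)` is spanned by the vectors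
`u⁽¹⁾_{-k₁-1} ⋯ u⁽ʳ⁾_{-k_r-1} w` with `r ≥ 1`, `kᵢ ≥ 1`, `k₁ + ⋯ + k_r ≥ n`. -/
theorem stmt1 {V : Type*} [AddCommGroup V] [Module ℂ V] {W : Type*} [AddCommGroup W]
    [Module ℂ W] (va : VertexAlgebra V) (M : VAModule va W) (n : ℤ) (hn : 1 ≤ n) :
    Efilt M n = Submodule.span ℂ {x : W | ∃ (u : V) (i : ℕ), 1 ≤ i ∧
        ∃ w ∈ Efilt M (n - (i : ℤ)), x = M.act u (-1 - (i : ℤ)) w} ∧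
    Efilt M n = Submodule.span ℂ {x : W | ∃ (L : List (V × ℕ)) (w : W), L ≠ [] ∧
        (∀ p ∈ L, 1 ≤ p.2) ∧ n ≤ (L.map fun p => ((p.2 : ℤ))).sum ∧
        x = L.foldr (fun p acc => M.act p.1 (-1 - (p.2 : ℤ)) acc) w} :=
  ⟨part1 M n hn, part2 M n hn⟩

end
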